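/- Fix 0 < p < 1 and let μ be a finite even Borel measure on ℝⁿ, not supported on any hyperplane. Let ψ : ℝⁿ → [0,∞] be an even lower semi-continuous convex function with ψ(0) = 0 and write φ = ψ*. Then ∫ ψ^p dμ ≥ c_μ (∫ e^{-φ})^{p/n} - C_μ, where c_μ, C_μ > 0 depend only on μ, p, n and not on ψ. -/

import Mathlib

open MeasureTheory Filter Topology Set
open scoped ENNReal NNReal

noncomputable section

abbrev Euc (n : ℕ) := EuclideanSpace ℝ (Fin n)

variable {n : ℕ}

/-- Legendre transform of an extended-real-valued function. -/
def legendre (ψ : Euc n → EReal) (x : Euc n) : EReal :=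
  ⨆ y, ((inner ℝ x y : ℝ) : EReal) - ψ y

/-- Log-concavity. -/
def IsLogConcave (f : Euc n → ℝ) : Prop :=
  (∀ x, 0 ≤ f x) ∧ ∀ x y : Euc n, ∀ l : ℝ, 0 ≤ l → l ≤ 1 →
    f x ^ (1 - l) * f y ^ l ≤ f ((1 - l) • x + l • y)

/-- `- log f`, with value `⊤` where `f` vanishes. -/
def negLog (f : Euc n → ℝ) (x : Euc n) : EReal :=
  if f x = 0 then ⊤ else ((- Real.log (f x) : ℝ) : EReal)

/-- The support function `h_f = (-log f)^*`. -/
def suppFn (f : Euc n → ℝ) : Euc n → EReal := legendre (negLog f)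

/-- The gradient `∇φ` of `φ = - log f`. -/
def negLogGrad (f : Euc n → ℝ) (x : Euc n) : Euc n :=
  gradient (fun y => - Real.log (f y)) x

/-- The measure `f(x) dx`. -/
def fMeasure (f : Euc n → ℝ) : Measure (Euc n) :=
  volume.withDensity fun x => ENNReal.ofReal (f x)

/-- Positive part of an extended real, as an element of `[0,∞]`. -/
def posPartE (a : EReal) : ℝ≥0∞ := if a = ⊤ then ⊤ else ENNReal.ofReal a.toReal

/-- `∫ ρ dS_f = ∫ ρ(∇φ(x)) f(x) dx` as an extended real number. -/
def SfInt (f : Euc n → ℝ) (ρ : Euc n → EReal) : EReal :=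
  ((∫⁻ x, posPartE (ρ (negLogGrad f x)) ∂(fMeasure f) : ℝ≥0∞) : EReal)
    - ((∫⁻ x, posPartE (-(ρ (negLogGrad f x))) ∂(fMeasure f) : ℝ≥0∞) : EReal)

/-- The Asplund sum (sup-convolution) of two log-concave functions. -/
def asplund (f g : Euc n → ℝ) (x : Euc n) : ℝ := ⨆ y, f y * g (x - y)

/-- Dilation `(t·g)(x) = g(x/t)^t`. -/
def dil (t : ℝ) (g : Euc n → ℝ) (x : Euc n) : ℝ := g (t⁻¹ • x) ^ t

/-- Difference quotient of `t ↦ ∫ f ⋆ (t·g)` at `0`, as an extended real. -/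
def deltaQuot (f g : Euc n → ℝ) (t : ℝ) : EReal :=
  (((∫⁻ x, ENNReal.ofReal (asplund f (dil t g) x) : ℝ≥0∞) : EReal)
    - ((∫⁻ x, ENNReal.ofReal (f x) : ℝ≥0∞) : EReal)) * ((t⁻¹ : ℝ) : EReal)

/-- Essential continuity of a log-concave function. -/
def EssCont (f : Euc n → ℝ) : Prop :=
  μH[(n : ℝ) - 1] {x : Euc n | ¬ ContinuousAt f x} = 0

/-- `e^{-a}` for an extended real `a`, valued in `[0,∞]`. -/
def expNeg (a : EReal) : ℝ≥0∞ :=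
  if a = ⊤ then 0 else if a = ⊥ then ⊤ else ENNReal.ofReal (Real.exp (- a.toReal))

/-- Convexity for extended-real-valued functions. -/
def ERealConvex {n : ℕ} (ψ : Euc n → EReal) : Prop :=
  ∀ x y : Euc n, ∀ a b : ℝ, 0 ≤ a → 0 ≤ b → a + b = 1 →
    ψ (a • x + b • y) ≤ (a : EReal) * ψ x + (b : EReal) * ψ y

section AuxStatement13

variable {n : ℕ}

lemma ereal_toReal_nonneg {x : EReal} (h0 : 0 ≤ x) : 0 ≤ x.toReal := by
  by_cases hx : x = ⊤
  · simp [hx]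
  · have := EReal.toReal_le_toReal h0 (by simp) hx
    simpa using this

lemma legendre_nonneg' (ψ : Euc n → EReal) (h0 : ψ 0 = 0) (x : Euc n) :
    0 ≤ legendre ψ x := by
  have h : ((inner ℝ x (0 : Euc n) : ℝ) : EReal) - ψ 0 ≤ legendre ψ x :=
    le_iSup (fun y => ((inner ℝ x y : ℝ) : EReal) - ψ y) 0
  simpa [h0, inner_zero_right] using h

lemma expNeg_le_one {a : EReal} (ha : 0 ≤ a) : expNeg a ≤ 1 := by
  rw [expNeg]
  split_ifs with h1 h2
  · exact zero_le
  · exact absurd h2 (EReal.bot_lt_zero.trans_le ha).ne'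
  · rw [← ENNReal.ofReal_one]
    apply ENNReal.ofReal_le_ofReal
    have h3 : 0 ≤ a.toReal := ereal_toReal_nonneg ha
    calc Real.exp (-a.toReal) ≤ Real.exp 0 := Real.exp_le_exp.mpr (by linarith)
      _ = 1 := Real.exp_zero

lemma key1 (ψ : Euc n → EReal) (hsym : ∀ x, ψ (-x) = ψ x) (hpos : ∀ x, 0 ≤ ψ x)
    (h0 : ψ 0 = 0) (x y : Euc n) :
    ((|(inner ℝ x y : ℝ)| : ℝ) : EReal) ≤ ψ y + legendre ψ x := by
  have hL : 0 ≤ legendre ψ x := legendre_nonneg' ψ h0 x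
  have hLbot : legendre ψ x ≠ ⊥ := (EReal.bot_lt_zero.trans_le hL).ne'
  obtain ⟨y', hy1, hy2⟩ : ∃ y', ψ y' = ψ y ∧ (inner ℝ x y' : ℝ) = |(inner ℝ x y : ℝ)| := by
    rcases le_or_gt 0 (inner ℝ x y : ℝ) with h | h
    · exact ⟨y, rfl, (abs_of_nonneg h).symm⟩
    · refine ⟨-y, hsym y, ?_⟩
      rw [inner_neg_right, abs_of_neg h]
  have hsup : ((inner ℝ x y' : ℝ) : EReal) - ψ y' ≤ legendre ψ x :=
    le_iSup (fun z => ((inner ℝ x z : ℝ) : EReal) - ψ z) y'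
  rw [hy1, hy2] at hsup
  by_cases hT : ψ y = ⊤
  · rw [hT, EReal.top_add_of_ne_bot hLbot]; exact le_top
  · have hB : ψ y ≠ ⊥ := (EReal.bot_lt_zero.trans_le (hpos y)).ne'
    have hco : ψ y = (((ψ y).toReal : ℝ) : EReal) := (EReal.coe_toReal hT hB).symm
    rw [hco] at hsup ⊢
    rw [← EReal.coe_sub] at hsup
    calc ((|(inner ℝ x y : ℝ)| : ℝ) : EReal)
        = (((ψ y).toReal : ℝ) : EReal)
            + ((|(inner ℝ x y : ℝ)| - (ψ y).toReal : ℝ) : EReal) := by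
          rw [← EReal.coe_add]; norm_num
      _ ≤ (((ψ y).toReal : ℝ) : EReal) + legendre ψ x := add_le_add_right hsup _

lemma key2 {p : ℝ} (hp0 : 0 < p) (hp1 : p ≤ 1) (ψ : Euc n → EReal)
    (hsym : ∀ x, ψ (-x) = ψ x) (hpos : ∀ x, 0 ≤ ψ x) (h0 : ψ 0 = 0)
    (x : Euc n) {s : ℝ} (hs0 : 0 ≤ s) (hLs : legendre ψ x = (s : EReal)) (y : Euc n) :
    ENNReal.ofReal (|(inner ℝ x y : ℝ)| ^ p) ≤ posPartE (ψ y) ^ p + ENNReal.ofReal (s ^ p) := by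
  by_cases hT : ψ y = ⊤
  · have hpp : posPartE (ψ y) = ⊤ := if_pos hT
    rw [hpp, ENNReal.top_rpow_of_pos hp0, top_add]
    exact le_top
  · have hB : ψ y ≠ ⊥ := (EReal.bot_lt_zero.trans_le (hpos y)).ne'
    have hu0 : 0 ≤ (ψ y).toReal := ereal_toReal_nonneg (hpos y)
    have h1 := key1 ψ hsym hpos h0 x y
    rw [hLs, ← EReal.coe_toReal hT hB, ← EReal.coe_add, EReal.coe_le_coe_iff] at h1
    have hpp : posPartE (ψ y) = ENNReal.ofReal (ψ y).toReal := if_neg hT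
    rw [hpp]
    calc ENNReal.ofReal (|(inner ℝ x y : ℝ)| ^ p)
        = ENNReal.ofReal |(inner ℝ x y : ℝ)| ^ p :=
          (ENNReal.ofReal_rpow_of_nonneg (abs_nonneg _) hp0.le).symm
      _ ≤ (ENNReal.ofReal (ψ y).toReal + ENNReal.ofReal s) ^ p := by
          refine ENNReal.rpow_le_rpow ?_ hp0.le
          rw [← ENNReal.ofReal_add hu0 hs0]
          exact ENNReal.ofReal_le_ofReal h1
      _ ≤ ENNReal.ofReal (ψ y).toReal ^ p + ENNReal.ofReal s ^ p :=
          ENNReal.rpow_add_le_add_rpow _ _ hp0.le hp1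
      _ = ENNReal.ofReal (ψ y).toReal ^ p + ENNReal.ofReal (s ^ p) := by
          rw [ENNReal.ofReal_rpow_of_nonneg (x := s) hs0 hp0.le]

lemma integrable_exp_tail (hn : 0 < n) {κ : ℝ} (hκ : 0 < κ) :
    Integrable (fun x : Euc n => Real.exp (-(κ * ‖x‖))) volume := by
  have h1 : Integrable (fun x : Euc n => Real.exp (-‖x‖ ^ (1 : ℝ))) volume := by
    by_contra h
    have h2 := MeasureTheory.measure_unitBall_eq_integral_div_gamma
      (volume : Measure (Euc n)) one_pos
    rw [integral_undef h] at h2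
    simp only [zero_div, ENNReal.ofReal_zero] at h2
    exact (Metric.measure_ball_pos volume (0 : Euc n) one_pos).ne' h2
  simp only [Real.rpow_one] at h1
  have h3 := (integrable_comp_smul_iff (volume : Measure (Euc n))
      (fun x : Euc n => Real.exp (-‖x‖)) (ne_of_gt hκ)).mpr h1
  have h4 : ∀ x : Euc n, Real.exp (-‖κ • x‖) = Real.exp (-(κ * ‖x‖)) := by
    intro x
    rw [norm_smul, Real.norm_eq_abs, abs_of_pos hκ]
  simpa only [h4] using h3

end AuxStatement13

set_option maxHeartbeats 1000000 in
/-- coercivity lemma. For `μ` finite, even, and not supported on a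
hyperplane, every even lsc convex `ψ ≥ 0` with `ψ(0) = 0` satisfies
`∫ ψ^p dμ ≥ c_μ (∫ e^{-ψ*})^{p/n} - C_μ`. -/
theorem statement13 {n : ℕ} (hn : 0 < n) (p : ℝ) (hp0 : 0 < p) (hp1 : p < 1)
    (μ : Measure (Euc n)) [IsFiniteMeasure μ]
    (heven : μ.map (fun x => -x) = μ)
    (hsupp : ∀ θ : Euc n, θ ≠ 0 → μ {x : Euc n | (inner ℝ θ x : ℝ) ≠ 0} ≠ 0) :
    ∃ c C : ℝ, 0 < c ∧ 0 < C ∧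
      ∀ ψ : Euc n → EReal, LowerSemicontinuous ψ → ERealConvex ψ →
        (∀ x, ψ (-x) = ψ x) → (∀ x, 0 ≤ ψ x) → ψ 0 = 0 →
        (c : EReal) * (((∫⁻ x, expNeg (legendre ψ x)) ^ (p / n) : ℝ≥0∞) : EReal)
            - (C : EReal)
          ≤ ((∫⁻ x, posPartE (ψ x) ^ p ∂μ : ℝ≥0∞) : EReal) := by
  classical
  have hn1 : (1 : ℝ) ≤ (n : ℝ) := by exact_mod_cast hn
  have hnR : (0 : ℝ) < (n : ℝ) := by linarith
  -- Nontrivial instance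
  haveI : Nontrivial (Euc n) := by
    refine nontrivial_of_ne (EuclideanSpace.single (⟨0, hn⟩ : Fin n) (1 : ℝ)) 0 ?_
    intro h
    have h1 : ‖EuclideanSpace.single (⟨0, hn⟩ : Fin n) (1 : ℝ)‖ = 1 := by
      rw [EuclideanSpace.norm_single]; norm_num
    rw [h, norm_zero] at h1
    norm_num at h1
  -- μ has positive total mass
  have hθ₀ : (EuclideanSpace.single (⟨0, hn⟩ : Fin n) (1 : ℝ)) ≠ 0 := by
    intro h
    have h1 : ‖EuclideanSpace.single (⟨0, hn⟩ : Fin n) (1 : ℝ)‖ = 1 := by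
      rw [EuclideanSpace.norm_single]; norm_num
    rw [h, norm_zero] at h1; norm_num at h1
  have hμ0 : μ Set.univ ≠ 0 := by
    intro h
    exact hsupp _ hθ₀ (le_antisymm (le_trans (measure_mono (Set.subset_univ _)) h.le) (zero_le))
  set M' : ℝ := (μ Set.univ).toReal with hM'def
  have hM' : 0 < M' := ENNReal.toReal_pos hμ0 (measure_ne_top μ _)
  -- the function g and G
  set g : Euc n → Euc n → ℝ := fun θ y => min (|(inner ℝ θ y : ℝ)| ^ p) 1 with hgdef
  have hg_nonneg : ∀ θ y, 0 ≤ g θ y := fun θ y =>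
    le_min (Real.rpow_nonneg (abs_nonneg _) p) zero_le_one
  have hg_le_one : ∀ θ y, g θ y ≤ 1 := fun θ y => min_le_right _ _
  have hrpow_cont : Continuous (fun t : ℝ => |t| ^ p) :=
    continuous_abs.rpow_const (fun t => Or.inr hp0.le)
  have hg_cont_y : ∀ θ, Continuous (g θ) := by
    intro θ
    exact ((hrpow_cont.comp (Continuous.inner continuous_const continuous_id)).min
      continuous_const)
  have hg_cont_θ : ∀ y, Continuous (fun θ => g θ y) := by
    intro y
    exact ((hrpow_cont.comp (Continuous.inner continuous_id continuous_const)).min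
      continuous_const)
  set G : Euc n → ℝ := fun θ => ∫ y, g θ y ∂μ with hGdef
  have hGint : ∀ θ, Integrable (g θ) μ := by
    intro θ
    refine (integrable_const (1 : ℝ)).mono' (hg_cont_y θ).aestronglyMeasurable ?_
    refine ae_of_all _ fun y => ?_
    rw [Real.norm_eq_abs, abs_of_nonneg (hg_nonneg θ y)]
    exact hg_le_one θ y
  have hGcont : Continuous G := by
    refine continuous_of_dominated
      (fun θ => (hg_cont_y θ).aestronglyMeasurable)
      (fun θ => ae_of_all _ fun y => ?_) (integrable_const (1 : ℝ))
      (ae_of_all _ fun y => hg_cont_θ y)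
    rw [Real.norm_eq_abs, abs_of_nonneg (hg_nonneg θ y)]
    exact hg_le_one θ y
  have hGpos : ∀ θ ∈ Metric.sphere (0 : Euc n) 1, 0 < G θ := by
    intro θ hθ
    have hθne : θ ≠ 0 := by
      intro h
      rw [Metric.mem_sphere, h, dist_self] at hθ
      norm_num at hθ
    rw [hGdef]
    rw [integral_pos_iff_support_of_nonneg (fun y => hg_nonneg θ y) (hGint θ)]
    have hsup_eq : Function.support (g θ) = {y : Euc n | (inner ℝ θ y : ℝ) ≠ 0} := by
      ext y
      simp only [Function.mem_support, Set.mem_setOf_eq, hgdef]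
      constructor
      · intro h hy
        apply h
        rw [hy]
        simp [Real.zero_rpow hp0.ne']
      · intro h hmin
        rcases min_eq_iff.mp hmin with ⟨h1, -⟩ | ⟨h1, -⟩
        · exact h (abs_eq_zero.mp
            (((Real.rpow_eq_zero_iff_of_nonneg (abs_nonneg _)).mp h1).1))
        · norm_num at h1
    rw [hsup_eq]
    exact pos_iff_ne_zero.mpr (hsupp θ hθne)
  -- minimum of G on the sphere
  obtain ⟨θm, hθm, hminOn⟩ := (isCompact_sphere (0 : Euc n) 1).exists_isMinOn
    (NormedSpace.sphere_nonempty.mpr zero_le_one) hGcont.continuousOn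
  set m₁ : ℝ := G θm with hm₁def
  have hm₁pos : 0 < m₁ := hGpos θm hθm
  have hm₁le : ∀ θ ∈ Metric.sphere (0 : Euc n) 1, m₁ ≤ G θ := fun θ hθ =>
    (isMinOn_iff.mp hminOn) θ hθ
  -- constants
  set κ : ℝ := (m₁ / (2 * M')) ^ (p⁻¹) with hκdef
  have hκpos : 0 < κ := Real.rpow_pos_of_pos (by positivity) _
  have hκp : κ ^ p = m₁ / (2 * M') := Real.rpow_inv_rpow (by positivity) hp0.ne'
  set A : ℝ≥0∞ := ∫⁻ x : Euc n, ENNReal.ofReal (Real.exp (-(κ * ‖x‖))) with hAdef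
  have hAtop : A ≠ ⊤ := by
    have hint := integrable_exp_tail hn hκpos
    have := (hasFiniteIntegral_iff_ofReal
      (ae_of_all _ fun x : Euc n => (Real.exp_pos _).le)).mp hint.2
    exact this.ne
  set V : ℝ≥0∞ := volume (Metric.ball (0 : Euc n) 1) with hVdef
  have hVpos : 0 < V := Metric.measure_ball_pos volume (0 : Euc n) one_pos
  have hVtop : V ≠ ⊤ := measure_ball_lt_top.ne
  set q : ℝ := p / (n : ℝ) with hqdef
  have hq0 : 0 < q := div_pos hp0 hnR
  have hq1 : q ≤ 1 := by
    rw [hqdef, div_le_one hnR]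
    linarith
  set v : ℝ := (V ^ q).toReal with hvdef
  have hvpos : 0 < v := by
    rw [hvdef]
    refine ENNReal.toReal_pos ?_ ?_
    · exact (ENNReal.rpow_pos hVpos hVtop).ne'
    · exact ENNReal.rpow_ne_top_of_nonneg hq0.le hVtop
  set a1 : ℝ := (A ^ q).toReal with ha1def
  have ha1nonneg : 0 ≤ a1 := ENNReal.toReal_nonneg
  set b₀ : ℝ := 2 * v / m₁ with hb₀def
  have hb₀pos : 0 < b₀ := by positivity
  set a₀ : ℝ := v + 2 * v / m₁ + a1 + 1 with ha₀def
  have ha₀pos : 0 < a₀ := by positivity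
  refine ⟨1 / b₀, a₀ / b₀, by positivity, by positivity, ?_⟩
  intro ψ _ _ hsym hpos h0
  set J : ℝ≥0∞ := ∫⁻ x, posPartE (ψ x) ^ p ∂μ with hJdef
  by_cases hJtop : J = ⊤
  · rw [hJtop, EReal.coe_ennreal_top]
    exact le_top
  set J' : ℝ := J.toReal with hJ'def
  have hJ'0 : 0 ≤ J' := ENNReal.toReal_nonneg
  have hL0 : ∀ x, 0 ≤ legendre ψ x := legendre_nonneg' ψ h0
  set R : ℝ := max 1 ((2 * (J' + 1) / m₁) ^ (p⁻¹)) with hRdef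
  have hR1 : (1 : ℝ) ≤ R := le_max_left _ _
  have hR0 : (0 : ℝ) < R := lt_of_lt_of_le one_pos hR1
  -- key pointwise estimate outside the ball of radius R
  have hKey : ∀ x : Euc n, R ≤ ‖x‖ →
      expNeg (legendre ψ x) ≤ ENNReal.ofReal (Real.exp (-(κ * ‖x‖))) := by
    intro x hx
    by_cases hLT : legendre ψ x = ⊤
    · rw [expNeg, if_pos hLT]
      exact zero_le
    have hLB : legendre ψ x ≠ ⊥ := (EReal.bot_lt_zero.trans_le (hL0 x)).ne'
    set s : ℝ := (legendre ψ x).toReal with hsdef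
    have hs0 : 0 ≤ s := ereal_toReal_nonneg (hL0 x)
    have hLs : legendre ψ x = (s : EReal) := (EReal.coe_toReal hLT hLB).symm
    have hxpos : (0 : ℝ) < ‖x‖ := lt_of_lt_of_le hR0 hx
    set θ : Euc n := ‖x‖⁻¹ • x with hθdef
    have hθS : θ ∈ Metric.sphere (0 : Euc n) 1 := by
      rw [Metric.mem_sphere, dist_zero_right, hθdef, norm_smul, Real.norm_eq_abs,
        abs_of_pos (inv_pos.mpr hxpos), inv_mul_cancel₀ hxpos.ne']
    have hxθ : x = ‖x‖ • θ := by
      rw [hθdef, smul_smul, mul_inv_cancel₀ hxpos.ne', one_smul]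
    -- pointwise bound in y
    have hpt : ∀ y, ENNReal.ofReal (‖x‖ ^ p * g θ y)
        ≤ posPartE (ψ y) ^ p + ENNReal.ofReal (s ^ p) := by
      intro y
      refine le_trans ?_ (key2 hp0 hp1.le ψ hsym hpos h0 x hs0 hLs y)
      apply ENNReal.ofReal_le_ofReal
      have hinner : |(inner ℝ x y : ℝ)| = ‖x‖ * |(inner ℝ θ y : ℝ)| := by
        conv_lhs => rw [hxθ]
        rw [real_inner_smul_left, abs_mul, abs_of_pos hxpos]
      rw [hinner, Real.mul_rpow (norm_nonneg x) (abs_nonneg _)]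
      rcases le_total (|(inner ℝ θ y : ℝ)| ^ p) 1 with h | h
      · rw [hgdef]
        simp only [min_eq_left h, le_refl]
      · rw [hgdef]
        simp only [min_eq_right h]
        have := mul_le_mul_of_nonneg_left h (Real.rpow_nonneg (norm_nonneg x) p)
        linarith
    -- integrate in y
    have hint1 : ENNReal.ofReal (m₁ * ‖x‖ ^ p)
        ≤ J + ENNReal.ofReal (s ^ p) * μ Set.univ := by
      have hxpnn : (0 : ℝ) ≤ ‖x‖ ^ p := Real.rpow_nonneg (norm_nonneg x) p
      calc ENNReal.ofReal (m₁ * ‖x‖ ^ p)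
          = ENNReal.ofReal (‖x‖ ^ p) * ENNReal.ofReal m₁ := by
            rw [← ENNReal.ofReal_mul hxpnn, mul_comm]
        _ ≤ ENNReal.ofReal (‖x‖ ^ p) * ENNReal.ofReal (G θ) := by
            exact mul_le_mul_right (ENNReal.ofReal_le_ofReal (hm₁le θ hθS)) _
        _ ≤ ENNReal.ofReal (‖x‖ ^ p) * ∫⁻ y, ENNReal.ofReal (g θ y) ∂μ := by
            refine mul_le_mul_right ?_ _
            rw [hGdef]
            rw [ofReal_integral_eq_lintegral_ofReal (hGint θ)
              (ae_of_all _ fun y => hg_nonneg θ y)]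
        _ = ∫⁻ y, ENNReal.ofReal (‖x‖ ^ p) * ENNReal.ofReal (g θ y) ∂μ :=
            (lintegral_const_mul' _ _ ENNReal.ofReal_ne_top).symm
        _ = ∫⁻ y, ENNReal.ofReal (‖x‖ ^ p * g θ y) ∂μ :=
            lintegral_congr fun y => (ENNReal.ofReal_mul hxpnn).symm
        _ ≤ ∫⁻ y, (posPartE (ψ y) ^ p + ENNReal.ofReal (s ^ p)) ∂μ :=
            lintegral_mono hpt
        _ = J + ENNReal.ofReal (s ^ p) * μ Set.univ := by
            rw [lintegral_add_right _ measurable_const, lintegral_const]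
    have hμfin : ENNReal.ofReal (s ^ p) * μ Set.univ ≠ ⊤ :=
      ENNReal.mul_ne_top ENNReal.ofReal_ne_top (measure_ne_top μ _)
    have hfin : J + ENNReal.ofReal (s ^ p) * μ Set.univ ≠ ⊤ :=
      ENNReal.add_ne_top.mpr ⟨hJtop, hμfin⟩
    have hreal : m₁ * ‖x‖ ^ p ≤ J' + s ^ p * M' := by
      have h1 := (ENNReal.ofReal_le_iff_le_toReal hfin).mp hint1
      rwa [ENNReal.toReal_add hJtop hμfin, ENNReal.toReal_mul,
        ENNReal.toReal_ofReal (Real.rpow_nonneg hs0 p)] at h1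
    have hxp : 2 * (J' + 1) / m₁ ≤ ‖x‖ ^ p := by
      have h1 : (2 * (J' + 1) / m₁) ^ (p⁻¹) ≤ ‖x‖ := le_trans (le_max_right _ _) hx
      calc 2 * (J' + 1) / m₁ = ((2 * (J' + 1) / m₁) ^ (p⁻¹)) ^ p :=
            (Real.rpow_inv_rpow (by positivity) hp0.ne').symm
        _ ≤ ‖x‖ ^ p := Real.rpow_le_rpow (Real.rpow_nonneg (by positivity) _) h1 hp0.le
    have hb : 2 * (J' + 1) ≤ ‖x‖ ^ p * m₁ := by
      have := (div_le_iff₀ hm₁pos).mp hxp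
      linarith
    have hκx : κ * ‖x‖ ≤ s := by
      have h2 : (κ * ‖x‖) ^ p ≤ s ^ p := by
        rw [Real.mul_rpow hκpos.le (norm_nonneg x), hκp, div_mul_eq_mul_div,
          div_le_iff₀ (by positivity : (0:ℝ) < 2 * M')]
        linarith [hreal, hb]
      by_contra hcon
      push_neg at hcon
      have := Real.rpow_lt_rpow hs0 hcon hp0
      linarith
    rw [expNeg, if_neg hLT, if_neg hLB, ← hsdef]
    apply ENNReal.ofReal_le_ofReal
    exact Real.exp_le_exp.mpr (by linarith)
  -- global bound on I
  set I : ℝ≥0∞ := ∫⁻ x : Euc n, expNeg (legendre ψ x) with hIdef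
  have hIbound : I ≤ ENNReal.ofReal (R ^ n) * V + A := by
    have hstep : I ≤ volume (Metric.ball (0 : Euc n) R) + A := by
      have hptwise : ∀ x : Euc n, expNeg (legendre ψ x)
          ≤ (Metric.ball (0 : Euc n) R).indicator (fun _ => (1 : ℝ≥0∞)) x
            + ENNReal.ofReal (Real.exp (-(κ * ‖x‖))) := by
        intro x
        by_cases hx : x ∈ Metric.ball (0 : Euc n) R
        · rw [Set.indicator_of_mem hx]
          exact le_add_right (expNeg_le_one (hL0 x))
        · rw [Set.indicator_of_notMem hx, zero_add]
          apply hKey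
          rw [Metric.mem_ball, dist_zero_right, not_lt] at hx
          exact hx
      calc I ≤ ∫⁻ x : Euc n, ((Metric.ball (0 : Euc n) R).indicator
            (fun _ => (1 : ℝ≥0∞)) x + ENNReal.ofReal (Real.exp (-(κ * ‖x‖)))) :=
            lintegral_mono hptwise
        _ = volume (Metric.ball (0 : Euc n) R) + A := by
            rw [lintegral_add_left (measurable_const.indicator measurableSet_ball),
              lintegral_indicator_const measurableSet_ball, one_mul, hAdef]
    refine hstep.trans ?_
    have hball : volume (Metric.ball (0 : Euc n) R)
        = ENNReal.ofReal (R ^ n) * V := by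
      have h := Measure.addHaar_ball (volume : Measure (Euc n)) (0 : Euc n) hR0.le
      rw [finrank_euclideanSpace_fin] at h
      rw [hVdef]
      exact h
    rw [hball]
  -- rpow bound
  have hRq : (ENNReal.ofReal (R ^ n)) ^ q ≤ ENNReal.ofReal (1 + 2 * (J' + 1) / m₁) := by
    have h1 : ENNReal.ofReal (R ^ n) = (ENNReal.ofReal R) ^ ((n : ℝ) * 1) := by
      rw [mul_one, ENNReal.rpow_natCast, ENNReal.ofReal_pow hR0.le]
    rw [h1, ← ENNReal.rpow_mul]
    have h2 : (n : ℝ) * 1 * q = p := by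
      rw [hqdef]
      field_simp
    rw [h2, ENNReal.ofReal_rpow_of_nonneg hR0.le hp0.le]
    apply ENNReal.ofReal_le_ofReal
    rcases max_choice 1 ((2 * (J' + 1) / m₁) ^ (p⁻¹)) with h | h
    · rw [hRdef, h, Real.one_rpow]
      have : (0:ℝ) ≤ 2 * (J' + 1) / m₁ := by positivity
      linarith
    · rw [hRdef, h, Real.rpow_inv_rpow (by positivity) hp0.ne']
      linarith
  have hIq : I ^ q ≤ ENNReal.ofReal (1 + 2 * (J' + 1) / m₁) * V ^ q + A ^ q := by
    calc I ^ q ≤ (ENNReal.ofReal (R ^ n) * V + A) ^ q :=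
          ENNReal.rpow_le_rpow hIbound hq0.le
      _ ≤ (ENNReal.ofReal (R ^ n) * V) ^ q + A ^ q :=
          ENNReal.rpow_add_le_add_rpow _ _ hq0.le hq1
      _ = (ENNReal.ofReal (R ^ n)) ^ q * V ^ q + A ^ q := by
          rw [ENNReal.mul_rpow_of_nonneg _ _ hq0.le]
      _ ≤ ENNReal.ofReal (1 + 2 * (J' + 1) / m₁) * V ^ q + A ^ q := by
          exact add_le_add_left (mul_le_mul_left hRq _) _
  -- pass to reals
  set B : ℝ≥0∞ := ENNReal.ofReal (1 + 2 * (J' + 1) / m₁) * V ^ q + A ^ q with hBdef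
  have hVq_top : V ^ q ≠ ⊤ := ENNReal.rpow_ne_top_of_nonneg hq0.le hVtop
  have hAq_top : A ^ q ≠ ⊤ := ENNReal.rpow_ne_top_of_nonneg hq0.le hAtop
  have hBtop : B ≠ ⊤ := by
    rw [hBdef]
    exact ENNReal.add_ne_top.mpr
      ⟨ENNReal.mul_ne_top ENNReal.ofReal_ne_top hVq_top, hAq_top⟩
  have hIq_top : I ^ q ≠ ⊤ := (lt_of_le_of_lt hIq hBtop.lt_top).ne
  have hβ : (0:ℝ) ≤ 1 + 2 * (J' + 1) / m₁ := by positivity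
  have hXle : (I ^ q).toReal ≤ (1 + 2 * (J' + 1) / m₁) * v + a1 := by
    have h1 := ENNReal.toReal_le_toReal hIq_top hBtop |>.mpr hIq
    rwa [hBdef, ENNReal.toReal_add (ENNReal.mul_ne_top ENNReal.ofReal_ne_top hVq_top)
      hAq_top, ENNReal.toReal_mul, ENNReal.toReal_ofReal hβ, ← hvdef, ← ha1def] at h1
  set X : ℝ := (I ^ q).toReal with hXdef
  have hX0 : 0 ≤ X := ENNReal.toReal_nonneg
  have hXb : X ≤ b₀ * J' + a₀ := by
    rw [hb₀def, ha₀def]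
    have hexp : (1 + 2 * (J' + 1) / m₁) * v + a1
        = (2 * v / m₁) * J' + (v + 2 * v / m₁ + a1) := by
      field_simp
      ring
    rw [hXdef]
    calc (I ^ q).toReal ≤ (1 + 2 * (J' + 1) / m₁) * v + a1 := hXle
      _ = (2 * v / m₁) * J' + (v + 2 * v / m₁ + a1) := hexp
      _ ≤ 2 * v / m₁ * J' + (v + 2 * v / m₁ + a1 + 1) := by linarith
  -- final EReal computation
  have hcoe : ∀ (x : ℝ≥0∞), x ≠ ⊤ → ((x : EReal) = ((x.toReal : ℝ) : EReal)) := by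
    intro x hx
    rw [← EReal.coe_toReal (x := (x : EReal))
      (by rwa [ne_eq, EReal.coe_ennreal_eq_top_iff]) (EReal.coe_ennreal_ne_bot x),
      EReal.toReal_coe_ennreal]
  rw [hcoe _ hIq_top, hcoe _ hJtop, ← hXdef, ← hJ'def, ← EReal.coe_mul, ← EReal.coe_sub,
    EReal.coe_le_coe_iff]
  have hmul := mul_le_mul_of_nonneg_left hXb (le_of_lt (by positivity : (0:ℝ) < 1 / b₀))
  have heq : (1 / b₀) * (b₀ * J' + a₀) = J' + a₀ / b₀ := by
    field_simp
  linarith [hmul, heq]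

end
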